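/- arXiv:1910.10364 — 6 statements merged into one kernel-verified Lean document; each statement's English description precedes it below -/
import Mathlib

section
/- A graph is a threshold graph if and only if it contains no induced subgraph isomorphic to P4 (path on 4 vertices), C4 (cycle on 4 vertices), or 2K2 (two disjoint edges). -/
/-- A threshold graph: constructible from the one-vertex graph by repeatedly adding
an isolated vertex or a universal vertex. -/
def IsThreshold {V : Type*} (G : SimpleGraph V) : Prop :=
  ∃ (n : ℕ) (e : V ≃ Fin n), ∀ i : Fin n,
    (∀ j, j < i → ¬ G.Adj (e.symm j) (e.symm i)) ∨ (∀ j, j < i → G.Adj (e.symm j) (e.symm i))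

/-- The graph `2K₂`: two disjoint edges, on the vertex set `Fin 4`. -/
def twoKTwo : SimpleGraph (Fin 4) :=
  SimpleGraph.fromEdgeSet {s(0, 1), s(2, 3)}

open SimpleGraph

/-- The "bad pattern": four distinct vertices with edges `ab`, `cd` and
non-edges `ac`, `bd`. -/
def NoBad {V : Type*} (G : SimpleGraph V) : Prop :=
  ∀ a b c d : V, a ≠ c → a ≠ d → b ≠ c → b ≠ d →
    G.Adj a b → G.Adj c d → ¬ G.Adj a c → ¬ G.Adj b d → False

section Forward

private lemma aux_max {V : Type*} {G : SimpleGraph V} {n : ℕ} (e : V ≃ Fin n)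
    (he : ∀ i : Fin n,
      (∀ j, j < i → ¬ G.Adj (e.symm j) (e.symm i)) ∨ (∀ j, j < i → G.Adj (e.symm j) (e.symm i)))
    {x y z : V} (hy : e y < e x) (hz : e z < e x)
    (hadj : G.Adj y x) (hnadj : ¬ G.Adj z x) : False := by
  rcases he (e x) with h | h
  · exact h (e y) hy (by simpa using hadj)
  · exact hnadj (by simpa using h (e z) hz)

lemma isThreshold_noBad {V : Type*} {G : SimpleGraph V} (h : IsThreshold G) : NoBad G := by
  obtain ⟨n, e, he⟩ := h
  intro a b c d hac had hbc hbd hab hcd hnac hnbd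
  have hab' := hab.ne
  have hcd' := hcd.ne
  -- indices
  have eac : e a ≠ e c := fun h => hac (e.injective h)
  have ead : e a ≠ e d := fun h => had (e.injective h)
  have ebc : e b ≠ e c := fun h => hbc (e.injective h)
  have ebd : e b ≠ e d := fun h => hbd (e.injective h)
  have eab : e a ≠ e b := fun h => hab' (e.injective h)
  have ecd : e c ≠ e d := fun h => hcd' (e.injective h)
  rcases lt_or_gt_of_ne eab with h1 | h1
  · -- e a < e b
    rcases lt_or_gt_of_ne ebd with h2 | h2
    · -- e b < e d
      rcases lt_or_gt_of_ne ecd with h3 | h3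
      · -- max is d
        exact aux_max e he h3 h2 hcd hnbd
      · -- max is c
        exact aux_max e he h3 ((h1.trans h2).trans h3) hcd.symm hnac
    · -- max is b
      exact aux_max e he h1 h2 hab (fun h => hnbd h.symm)
  · -- e b < e a
    rcases lt_or_gt_of_ne eac with h2 | h2
    · -- e a < e c
      rcases lt_or_gt_of_ne ecd with h3 | h3
      · -- max is d
        exact aux_max e he h3 ((h1.trans h2).trans h3) hcd hnbd
      · -- max is c
        exact aux_max e he h3 h2 hcd.symm hnac
    · -- max is a
      exact aux_max e he h1 h2 hab.symm (fun h => hnac h.symm)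

end Forward

section Backward

variable {V : Type*} {G : SimpleGraph V}

lemma noBad_nested (h : NoBad G) (u v : V) :
    (∀ a, G.Adj u a → a ≠ v → G.Adj v a) ∨ (∀ b, G.Adj v b → b ≠ u → G.Adj u b) := by
  by_contra hc
  push_neg at hc
  obtain ⟨⟨a, hua, hav, hnva⟩, ⟨b, hvb, hbu, hnub⟩⟩ := hc
  have hab : a ≠ b := fun hab => hnub (hab ▸ hua)
  have huv : u ≠ v := fun huv => hnub (huv ▸ hvb)
  exact h a u v b hav hab huv (fun h' => hbu h'.symm) hua.symm hvb
    (fun h' => hnva h'.symm) hnub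

lemma noBad_exists_special [Fintype V] [Nonempty V] (h : NoBad G) :
    ∃ v, (∀ u, u ≠ v → ¬ G.Adj u v) ∨ (∀ u, u ≠ v → G.Adj u v) := by
  classical
  letI : DecidableRel G.Adj := Classical.decRel _
  by_contra hc
  push_neg at hc
  -- every vertex has a neighbor and a non-neighbor
  obtain ⟨v, -, hvmax⟩ := Finset.exists_max_image (α := ℕ) Finset.univ (fun x => G.degree x) Finset.univ_nonempty
  obtain ⟨⟨w0, hw0v, hw0adj⟩, ⟨w, hwv, hwnadj⟩⟩ := hc v
  -- w is a non-neighbor of v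
  have hnvw : ¬ G.Adj v w := fun h' => hwnadj h'.symm
  -- find a common neighbor a of w adjacent to v
  have ⟨a, hwa, hva⟩ : ∃ a, G.Adj w a ∧ G.Adj v a := by
    rcases noBad_nested h w v with hn | hn
    · obtain ⟨u', hu'w, hu'adj⟩ := (hc w).1
      have haw : G.Adj w u' := hu'adj.symm
      have hu'v : u' ≠ v := fun h' => hnvw (h' ▸ haw).symm
      exact ⟨u', haw, hn u' haw hu'v⟩
    · have hvb : G.Adj v w0 := hw0adj.symm
      have hbw : w0 ≠ w := fun h' => hnvw (h' ▸ hvb)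
      exact ⟨w0, hn w0 hvb hbw, hvb⟩
  rcases noBad_nested h a v with hn | hn
  · exact hnvw (hn w hwa.symm hwv)
  · -- degree of a exceeds degree of v
    have hav : a ≠ v := G.ne_of_adj hva.symm
    have haw : a ≠ w := G.ne_of_adj hwa.symm
    have hvw : v ≠ w := Ne.symm hwv
    have hsub : insert v (insert w ((G.neighborFinset v).erase a)) ⊆ G.neighborFinset a := by
      intro x hx
      rw [SimpleGraph.mem_neighborFinset]
      simp only [Finset.mem_insert, Finset.mem_erase, SimpleGraph.mem_neighborFinset] at hx
      rcases hx with rfl | rfl | ⟨hxa, hvx⟩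
      · exact hva.symm
      · exact hwa.symm
      · exact (hn x hvx (fun h' => hxa h')).symm.symm  -- need Adj a x
    have hvnot : v ∉ insert w ((G.neighborFinset v).erase a) := by
      simp only [Finset.mem_insert, Finset.mem_erase, SimpleGraph.mem_neighborFinset]
      push_neg
      exact ⟨hvw, fun _ => G.irrefl⟩
    have hwnot : w ∉ (G.neighborFinset v).erase a := by
      simp only [Finset.mem_erase, SimpleGraph.mem_neighborFinset]
      exact fun h' => hnvw h'.2
    have hmem : a ∈ G.neighborFinset v := by
      rw [SimpleGraph.mem_neighborFinset]; exact hva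
    have hcard : (insert v (insert w ((G.neighborFinset v).erase a))).card
        = G.degree v + 1 := by
      rw [Finset.card_insert_of_notMem hvnot, Finset.card_insert_of_notMem hwnot,
        Finset.card_erase_of_mem hmem]
      have : 1 ≤ G.degree v := by
        rw [← SimpleGraph.card_neighborFinset_eq_degree]
        exact Finset.card_pos.2 ⟨a, hmem⟩
      rw [← SimpleGraph.card_neighborFinset_eq_degree]
      rw [← SimpleGraph.card_neighborFinset_eq_degree] at this
      omega
    have hle : G.degree v + 1 ≤ G.degree a := by
      rw [← hcard, ← SimpleGraph.card_neighborFinset_eq_degree]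
      exact Finset.card_le_card hsub
    have := hvmax a (Finset.mem_univ a)
    omega

lemma noBad_induce (h : NoBad G) (s : Set V) : NoBad (G.induce s) := by
  intro a b c d hac had hbc hbd hab hcd hnac hnbd
  exact h a b c d (Subtype.coe_injective.ne hac) (Subtype.coe_injective.ne had)
    (Subtype.coe_injective.ne hbc) (Subtype.coe_injective.ne hbd)
    hab hcd (fun h' => hnac h') (fun h' => hnbd h')

lemma noBad_isThreshold_aux :
    ∀ (n : ℕ) {V : Type u} [Fintype V] (G : SimpleGraph V),
      Fintype.card V ≤ n → NoBad G → IsThreshold G := by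
  intro n
  induction n with
  | zero =>
    intro V _ G hcard _
    have : Fintype.card V = 0 := Nat.le_zero.mp hcard
    refine ⟨0, Fintype.equivFinOfCardEq this, fun i => i.elim0⟩
  | succ n ih =>
    intro V _ G hcard hnb
    rcases isEmpty_or_nonempty V with hV | hV
    · have : Fintype.card V = 0 := Fintype.card_eq_zero
      refine ⟨0, Fintype.equivFinOfCardEq this, fun i => i.elim0⟩
    · classical
      obtain ⟨v, hv⟩ := noBad_exists_special hnb
      set s : Set V := {u | u ≠ v} with hs
      have hcard' : Fintype.card s ≤ n := by
        have h1 : Fintype.card s = Fintype.card V - 1 := by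
          simp only [hs]
          rw [Set.card_ne_eq]
        have h2 : 1 ≤ Fintype.card V := Fintype.card_pos
        omega
      obtain ⟨m, e', he'⟩ := ih (G.induce s) hcard' (noBad_induce hnb s)
      -- assemble the equivalence V ≃ Fin (m+1)
      let e : V ≃ Fin (m + 1) :=
        ((Equiv.optionSubtypeNe v).symm.trans e'.optionCongr).trans finSuccEquivLast.symm
      have hlast : e.symm (Fin.last m) = v := by
        simp [e, Equiv.symm_trans_apply, Equiv.optionCongr_apply, Option.map_none]
        rfl
      have hcs : ∀ j : Fin m, e.symm (Fin.castSucc j) = ((e'.symm j : s) : V) := by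
        intro j
        simp [e, Equiv.symm_trans_apply, finSuccEquivLast_castSucc, Equiv.optionCongr_apply,
          Option.map_some]
        rfl
      refine ⟨m + 1, e, fun i => ?_⟩
      rcases Fin.eq_castSucc_or_eq_last i with ⟨i', rfl⟩ | rfl
      · -- use the property of e' at i'
        rcases he' i' with hiso | huni
        · left
          intro j hj
          obtain ⟨j', rfl⟩ := (Fin.eq_castSucc_or_eq_last j).resolve_right (Fin.ne_last_of_lt hj)
          have hlt : j' < i' := by rwa [Fin.castSucc_lt_castSucc_iff] at hj
          rw [hcs, hcs]
          exact fun hadj => hiso j' hlt hadj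
        · right
          intro j hj
          obtain ⟨j', rfl⟩ := (Fin.eq_castSucc_or_eq_last j).resolve_right (Fin.ne_last_of_lt hj)
          have hlt : j' < i' := by rwa [Fin.castSucc_lt_castSucc_iff] at hj
          rw [hcs, hcs]
          exact huni j' hlt
      · -- the vertex v itself
        rcases hv with hv | hv
        · left
          intro j hj
          obtain ⟨j', rfl⟩ := (Fin.eq_castSucc_or_eq_last j).resolve_right (Fin.ne_last_of_lt hj)
          rw [hlast, hcs]
          exact hv _ (e'.symm j').property
        · right
          intro j hj
          obtain ⟨j', rfl⟩ := (Fin.eq_castSucc_or_eq_last j).resolve_right (Fin.ne_last_of_lt hj)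
          rw [hlast, hcs]
          exact hv _ (e'.symm j').property

end Backward

section Equivalence

variable {V : Type*} {G : SimpleGraph V}

lemma forbidden_noBad (hp : IsEmpty (pathGraph 4 ↪g G)) (hc : IsEmpty (cycleGraph 4 ↪g G))
    (ht : IsEmpty (twoKTwo ↪g G)) : NoBad G := by
  intro a b c d nac nad nbc nbd hab hcd hnac hnbd
  have nab : a ≠ b := hab.ne
  have ncd : c ≠ d := hcd.ne
  have hnca : ¬G.Adj c a := fun h => hnac h.symm
  have hndb : ¬G.Adj d b := fun h => hnbd h.symm
  by_cases h1 : G.Adj b c <;> by_cases h2 : G.Adj a d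
  · -- C₄ on a,b,c,d
    refine hc.elim ⟨⟨![a,b,c,d], ?_⟩, @fun i j => ?_⟩
    · intro i j hij
      fin_cases i <;> fin_cases j <;>
        simp_all [nab.symm, nac.symm, nad.symm, nbc.symm, nbd.symm, ncd.symm]
    · change G.Adj (![a,b,c,d] i) (![a,b,c,d] j) ↔ _
      fin_cases i <;> fin_cases j <;>
        simp (config := { decide := true }) [cycleGraph_adj, hab, hcd, h1, h2, hnac, hnbd,
          hnca, hndb, hab.symm, hcd.symm, h1.symm, h2.symm, SimpleGraph.irrefl]
  · -- P₄ : a-b-c-d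
    have hnda : ¬G.Adj d a := fun h => h2 h.symm
    refine hp.elim ⟨⟨![a,b,c,d], ?_⟩, @fun i j => ?_⟩
    · intro i j hij
      fin_cases i <;> fin_cases j <;>
        simp_all [nab.symm, nac.symm, nad.symm, nbc.symm, nbd.symm, ncd.symm]
    · change G.Adj (![a,b,c,d] i) (![a,b,c,d] j) ↔ _
      fin_cases i <;> fin_cases j <;>
        simp (config := { decide := true }) [pathGraph_adj, hab, hcd, h1, hnac, hnbd,
          hnca, hndb, hnda, h2, hab.symm, hcd.symm, h1.symm, SimpleGraph.irrefl]
  · -- P₄ : b-a-d-c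
    have hncb : ¬G.Adj c b := fun h => h1 h.symm
    have hnbc : ¬G.Adj b c := h1
    refine hp.elim ⟨⟨![b,a,d,c], ?_⟩, @fun i j => ?_⟩
    · intro i j hij
      fin_cases i <;> fin_cases j <;>
        simp_all [nab.symm, nac.symm, nad.symm, nbc.symm, nbd.symm, ncd.symm]
    · change G.Adj (![b,a,d,c] i) (![b,a,d,c] j) ↔ _
      fin_cases i <;> fin_cases j <;>
        simp (config := { decide := true }) [pathGraph_adj, hab, hcd, h2, hnac, hnbd,
          hnca, hndb, hncb, hnbc, hab.symm, hcd.symm, h2.symm, SimpleGraph.irrefl]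
  · -- 2K₂ on a,b,c,d
    have hncb : ¬G.Adj c b := fun h => h1 h.symm
    have hnda : ¬G.Adj d a := fun h => h2 h.symm
    refine ht.elim ⟨⟨![a,b,c,d], ?_⟩, @fun i j => ?_⟩
    · intro i j hij
      fin_cases i <;> fin_cases j <;>
        simp_all [nab.symm, nac.symm, nad.symm, nbc.symm, nbd.symm, ncd.symm]
    · change G.Adj (![a,b,c,d] i) (![a,b,c,d] j) ↔ _
      fin_cases i <;> fin_cases j <;>
        simp (config := { decide := true }) [twoKTwo, SimpleGraph.fromEdgeSet_adj, hab, hcd,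
          h1, h2, hnac, hnbd, hnca, hndb, hncb, hnda, hab.symm, hcd.symm, SimpleGraph.irrefl,
          Sym2.eq, Sym2.rel_iff', Prod.ext_iff]

lemma noBad_forbidden (h : NoBad G) :
    IsEmpty (pathGraph 4 ↪g G) ∧ IsEmpty (cycleGraph 4 ↪g G) ∧ IsEmpty (twoKTwo ↪g G) := by
  refine ⟨⟨fun f => ?_⟩, ⟨fun f => ?_⟩, ⟨fun f => ?_⟩⟩
  · exact h (f 0) (f 1) (f 2) (f 3)
      (f.injective.ne (by decide)) (f.injective.ne (by decide))
      (f.injective.ne (by decide)) (f.injective.ne (by decide))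
      (f.map_rel_iff.2 (by rw [pathGraph_adj]; decide))
      (f.map_rel_iff.2 (by rw [pathGraph_adj]; decide))
      (fun h' => absurd (f.map_rel_iff.1 h') (by rw [pathGraph_adj]; decide))
      (fun h' => absurd (f.map_rel_iff.1 h') (by rw [pathGraph_adj]; decide))
  · exact h (f 0) (f 1) (f 2) (f 3)
      (f.injective.ne (by decide)) (f.injective.ne (by decide))
      (f.injective.ne (by decide)) (f.injective.ne (by decide))
      (f.map_rel_iff.2 (by rw [cycleGraph_adj]; decide))
      (f.map_rel_iff.2 (by rw [cycleGraph_adj]; decide))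
      (fun h' => absurd (f.map_rel_iff.1 h') (by rw [cycleGraph_adj]; decide))
      (fun h' => absurd (f.map_rel_iff.1 h') (by rw [cycleGraph_adj]; decide))
  · exact h (f 0) (f 1) (f 2) (f 3)
      (f.injective.ne (by decide)) (f.injective.ne (by decide))
      (f.injective.ne (by decide)) (f.injective.ne (by decide))
      (f.map_rel_iff.2 (by simp [twoKTwo, SimpleGraph.fromEdgeSet_adj]))
      (f.map_rel_iff.2 (by simp [twoKTwo, SimpleGraph.fromEdgeSet_adj]))
      (fun h' => by
        have := f.map_rel_iff.1 h'
        simp [twoKTwo, SimpleGraph.fromEdgeSet_adj] at this)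
      (fun h' => by
        have := f.map_rel_iff.1 h'
        simp [twoKTwo, SimpleGraph.fromEdgeSet_adj] at this)

end Equivalence

/-- A finite graph is a threshold graph if and only if it has no induced subgraph
isomorphic to `P₄`, `C₄` or `2K₂`.  (Graph embeddings in Mathlib are induced:
they reflect adjacency.) -/
theorem isThreshold_iff_forbidden {V : Type*} [Fintype V] (G : SimpleGraph V) :
    IsThreshold G ↔
      IsEmpty (SimpleGraph.pathGraph 4 ↪g G) ∧
      IsEmpty (SimpleGraph.cycleGraph 4 ↪g G) ∧
      IsEmpty (twoKTwo ↪g G) := by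
  constructor
  · intro h
    exact noBad_forbidden (isThreshold_noBad h)
  · rintro ⟨hp, hc, ht⟩
    exact noBad_isThreshold_aux (Fintype.card V) G le_rfl (forbidden_noBad hp hc ht)
end

section
/- If a graph G on n vertices has a set X of k vertices whose deletion leaves a connected threshold graph on at least two vertices, and G admits an equitable coloring with r colors, then n ≤ r(k + 2). -/
open Finset

/-- If a graph `G` on `n` vertices has a set `X` of `k` vertices whose deletion leaves a
connected threshold graph on at least two vertices, and `G` admits an equitable coloring
with `r` colors, then `n ≤ r * (k + 2)`. -/
theorem card_le_of_equitable {V : Type*} [Fintype V] [DecidableEq V]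
    (G : SimpleGraph V) (X : Finset V) (k : ℕ) (hX : X.card = k)
    (hthr : IsThreshold (G.induce ((↑X : Set V)ᶜ)))
    (hconn : (G.induce ((↑X : Set V)ᶜ)).Connected)
    (htwo : ∃ a b : ((↑X : Set V)ᶜ : Set V), a ≠ b)
    (r : ℕ) (C : G.Coloring (Fin r))
    (heq : ∀ c c' : Fin r,
      (univ.filter fun v => C v = c).card ≤ (univ.filter fun v => C v = c').card + 1) :
    Fintype.card V ≤ r * (k + 2) := by
  classical
  obtain ⟨n, e, h⟩ := hthr
  obtain ⟨a, b, hab⟩ := htwo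
  have hn2 : 2 ≤ n := by
    by_contra hlt
    push_neg at hlt
    interval_cases n
    · exact (e a).elim0
    · exact hab (e.injective (Subsingleton.elim _ _))
  set i : Fin n := ⟨n - 1, by omega⟩ with hi
  have hlast : ∀ j : Fin n, j ≠ i → j < i := by
    intro j hj
    have := j.isLt
    have hv : j.val ≠ n - 1 := fun hh => hj (Fin.ext hh)
    have hival : (i : ℕ) = n - 1 := rfl
    exact Fin.lt_def.mpr (by omega)
  set u : ((↑X : Set V)ᶜ : Set V) := e.symm i with hu
  have huniv : ∀ v : ((↑X : Set V)ᶜ : Set V), v ≠ u → G.Adj ↑v ↑u := by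
    intro v hv
    have hevi : e v ≠ i := fun hh => hv (by rw [hu, ← hh, e.symm_apply_apply])
    have hlt := hlast _ hevi
    rcases h i with hiso | hun
    · -- isolated last vertex contradicts connectedness
      exfalso
      have hne : a ≠ u ∨ b ≠ u := by
        rcases eq_or_ne a u with rfl | hh
        · exact Or.inr (Ne.symm hab)
        · exact Or.inl hh
      have key : ∀ w, w ≠ u → False := by
        intro w hw
        obtain ⟨p⟩ := hconn.preconnected u w
        cases p with
        | nil => exact hw rfl
        | cons hadj p =>
          rename_i y
          have hez : e y ≠ i := by
            intro hh
            have hyu : y = u := by rw [hu, ← hh, e.symm_apply_apply]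
            exact hadj.ne (hyu.symm ▸ rfl)
          have := hiso _ (hlast _ hez)
          rw [e.symm_apply_apply] at this
          exact this hadj.symm
      rcases hne with hh | hh
      · exact key a hh
      · exact key b hh
    · have := hun _ hlt
      rw [e.symm_apply_apply] at this
      exact this
  have hsub : (univ.filter fun v => C v = C ↑u) ⊆ insert (↑u : V) X := by
    intro v hv
    simp only [mem_filter, mem_univ, true_and] at hv
    by_contra hmem
    simp only [mem_insert, not_or] at hmem
    obtain ⟨hvu, hvX⟩ := hmem
    have hvS : v ∈ ((↑X : Set V)ᶜ) := by simpa using hvX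
    have hadj := huniv ⟨v, hvS⟩ (fun hh => hvu (congrArg Subtype.val hh))
    exact C.valid hadj hv
  have hclass : (univ.filter fun v => C v = C ↑u).card ≤ k + 1 := by
    calc (univ.filter fun v => C v = C ↑u).card ≤ (insert (↑u : V) X).card :=
          card_le_card hsub
      _ ≤ X.card + 1 := card_insert_le _ _
      _ = k + 1 := by rw [hX]
  have hall : ∀ c : Fin r, (univ.filter fun v => C v = c).card ≤ k + 2 :=
    fun c => le_trans (heq c (C ↑u)) (by omega)
  calc Fintype.card V = ∑ c : Fin r, (univ.filter fun v => C v = c).card := by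
        rw [← Finset.card_univ]
        exact Finset.card_eq_sum_card_fiberwise (fun x _ => mem_univ (C x))
    _ ≤ ∑ _c : Fin r, (k + 2) := Finset.sum_le_sum fun c _ => hall c
    _ = r * (k + 2) := by simp
end

section
/- Let G be a graph and let H be the split graph with clique vertices {c_v : v ∈ V(G)} and independent vertices {I_e : e ∈ E(G)}, where I_{uv} is adjacent to every clique vertex except c_u and c_v. Assign lists L(c_v) = {1,…,n} and L(I_e) = {k+1,…,n}, where n = |V(G)|. Then G has an independent set of size k if and only if H has a proper coloring φ with φ(x) ∈ L(x) for all vertices x of H. -/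
open Finset

/-- The reduction graph `H` built from a graph `G`: its vertices are the clique
vertices `c_v` (for `v ∈ V(G)`) and the independent vertices `I_e` (for `e ∈ E(G)`);
the `c_v` form a clique, the `I_e` form an independent set, and `I_{uv}` is adjacent
to every clique vertex except `c_u` and `c_v`. -/
def redGraph {V : Type*} (G : SimpleGraph V) : SimpleGraph (V ⊕ G.edgeSet) :=
  SimpleGraph.fromRel fun a b =>
    match a, b with
    | Sum.inl u, Sum.inl v => u ≠ v
    | Sum.inl w, Sum.inr e => w ∉ (e : Sym2 V)
    | Sum.inr e, Sum.inl w => w ∉ (e : Sym2 V)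
    | Sum.inr _, Sum.inr _ => False

/-- With lists `L(c_v) = {1,…,n}` and `L(I_e) = {k+1,…,n}` (`n = |V(G)|`), the graph
`G` has an independent set of size `k` iff `H` has a proper list coloring. -/
theorem independentSet_iff_listColoring {V : Type*} [Fintype V] [DecidableEq V]
    (G : SimpleGraph V) (k : ℕ) (hk : k ≤ Fintype.card V) :
    (∃ S : Finset V, S.card = k ∧ (↑S : Set V).Pairwise fun a b => ¬ G.Adj a b) ↔
    (∃ φ : (redGraph G).Coloring ℕ,
      (∀ v : V, φ (Sum.inl v) ∈ Icc 1 (Fintype.card V)) ∧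
      (∀ e : G.edgeSet, φ (Sum.inr e) ∈ Icc (k + 1) (Fintype.card V))) := by
  constructor
  · rintro ⟨S, hScard, hSind⟩
    -- build an injection `g` sending `S` into `[1,k]` and its complement into `[k+1,n]`
    have hCcard : Sᶜ.card = Fintype.card V - k := by rw [Finset.card_compl, hScard]
    let eS : {x // x ∈ S} ≃ Fin k := S.equivFinOfCardEq hScard
    let eC : {x // x ∈ Sᶜ} ≃ Fin (Fintype.card V - k) := Sᶜ.equivFinOfCardEq hCcard
    let g : V → ℕ := fun v =>
      if h : v ∈ S then (eS ⟨v, h⟩).val + 1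
      else (eC ⟨v, by simpa using h⟩).val + k + 1
    have hgS : ∀ v (h : v ∈ S), 1 ≤ g v ∧ g v ≤ k := by
      intro v h
      have := (eS ⟨v, h⟩).isLt
      simp only [g, dif_pos h]
      omega
    have hgC : ∀ v (h : v ∉ S), k + 1 ≤ g v ∧ g v ≤ Fintype.card V := by
      intro v h
      have := (eC ⟨v, by simpa using h⟩).isLt
      simp only [g, dif_neg h]
      omega
    have ginj : Function.Injective g := by
      intro a b hab
      by_cases ha : a ∈ S <;> by_cases hb : b ∈ S
      · simp only [g, dif_pos ha, dif_pos hb] at hab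
        have : eS ⟨a, ha⟩ = eS ⟨b, hb⟩ := Fin.ext (by omega)
        simpa using eS.injective this
      · have h1 := hgS a ha; have h2 := hgC b hb; omega
      · have h1 := hgC a ha; have h2 := hgS b hb; omega
      · simp only [g, dif_neg ha, dif_neg hb] at hab
        have : eC ⟨a, by simpa using ha⟩ = eC ⟨b, by simpa using hb⟩ := Fin.ext (by omega)
        simpa using eC.injective this
    -- the color of an independent vertex
    let f : Sym2 V → ℕ := Sym2.lift ⟨fun u v =>
      max (if u ∈ S then 0 else g u) (if v ∈ S then 0 else g v),
      fun u v => max_comm _ _⟩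
    have hf : ∀ (e : Sym2 V), e ∈ G.edgeSet → ∃ w, w ∈ e ∧ w ∉ S ∧ f e = g w := by
      intro e he
      induction e using Sym2.ind with
      | _ u v =>
        have hadj : G.Adj u v := he
        have huv : ¬ (u ∈ S ∧ v ∈ S) := by
          rintro ⟨hu, hv⟩
          exact hSind hu hv hadj.ne hadj
        by_cases hu : u ∈ S
        · have hv : v ∉ S := fun hv => huv ⟨hu, hv⟩
          refine ⟨v, by simp [Sym2.mem_iff], hv, ?_⟩
          simp [f, Sym2.lift_mk, hu, hv]
        · by_cases hv : v ∈ S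
          · refine ⟨u, by simp [Sym2.mem_iff], hu, ?_⟩
            simp [f, Sym2.lift_mk, hu, hv]
          · rcases le_total (g u) (g v) with hle | hle
            · refine ⟨v, by simp [Sym2.mem_iff], hv, ?_⟩
              simp [f, Sym2.lift_mk, hu, hv, max_eq_right hle]
            · refine ⟨u, by simp [Sym2.mem_iff], hu, ?_⟩
              simp [f, Sym2.lift_mk, hu, hv, max_eq_left hle]
    let ψ : V ⊕ G.edgeSet → ℕ := Sum.elim g (fun e => f e.val)
    have hvalid : ∀ {a b : V ⊕ G.edgeSet}, (redGraph G).Adj a b → ψ a ≠ ψ b := by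
      intro a b hadj
      rw [redGraph, SimpleGraph.fromRel_adj] at hadj
      obtain ⟨hne, hrel⟩ := hadj
      rcases a with u | e <;> rcases b with v | e'
      · have huv : u ≠ v := by rcases hrel with h | h <;> exact fun he => h (by simp [he])
        simpa [ψ] using fun h => huv (ginj h)
      · have hmem : u ∉ (e' : Sym2 V) := by rcases hrel with h | h <;> exact h
        obtain ⟨w, hwmem, hwS, hfw⟩ := hf e'.val e'.prop
        simp only [ψ, Sum.elim_inl, Sum.elim_inr, hfw]
        intro h
        exact hmem (ginj h ▸ hwmem)
      · have hmem : v ∉ (e : Sym2 V) := by rcases hrel with h | h <;> exact h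
        obtain ⟨w, hwmem, hwS, hfw⟩ := hf e.val e.prop
        simp only [ψ, Sum.elim_inl, Sum.elim_inr, hfw]
        intro h
        exact hmem (ginj h.symm ▸ hwmem)
      · rcases hrel with h | h <;> exact h.elim
    refine ⟨SimpleGraph.Coloring.mk ψ hvalid, ?_, ?_⟩
    · intro v
      have hrfl : (SimpleGraph.Coloring.mk ψ hvalid) (Sum.inl v) = g v := rfl
      rw [mem_Icc, hrfl]
      by_cases h : v ∈ S
      · have := hgS v h; omega
      · have := hgC v h; omega
    · intro e
      obtain ⟨w, hwmem, hwS, hfw⟩ := hf e.val e.prop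
      have := hgC w hwS
      have hrfl : (SimpleGraph.Coloring.mk ψ hvalid) (Sum.inr e) = f e.val := rfl
      rw [mem_Icc, hrfl, hfw]
      omega
  · rintro ⟨φ, hc, hi⟩
    let h : V → ℕ := fun v => φ (Sum.inl v)
    have hinj : Function.Injective h := by
      intro u v huv
      by_contra hne
      have hadj : (redGraph G).Adj (Sum.inl u) (Sum.inl v) := by
        rw [redGraph, SimpleGraph.fromRel_adj]
        exact ⟨by simpa using hne, Or.inl hne⟩
      exact φ.valid hadj huv
    have himg : univ.image h = Icc 1 (Fintype.card V) := by
      apply Finset.eq_of_subset_of_card_le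
      · intro x hx
        obtain ⟨v, _, rfl⟩ := Finset.mem_image.mp hx
        exact hc v
      · rw [Finset.card_image_of_injective _ hinj, Nat.card_Icc]
        simp
    refine ⟨univ.filter (fun v => h v ≤ k), ?_, ?_⟩
    · have h1 : ((univ.filter (fun v => h v ≤ k)).image h).card
          = (univ.filter (fun v => h v ≤ k)).card :=
        Finset.card_image_of_injective _ hinj
      have h2 : (univ.image h).filter (fun x => x ≤ k)
          = (univ.filter (fun v => h v ≤ k)).image h := Finset.filter_image
      rw [himg] at h2
      have h3 : (Icc 1 (Fintype.card V)).filter (fun x => x ≤ k) = Icc 1 k := by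
        ext x
        simp only [mem_filter, mem_Icc]
        omega
      rw [← h2, h3, Nat.card_Icc] at h1
      omega
    · intro u hu v hv hne hadj
      have hu' : h u ≤ k := (Finset.mem_filter.mp (Finset.mem_coe.mp hu)).2
      have hv' : h v ≤ k := (Finset.mem_filter.mp (Finset.mem_coe.mp hv)).2
      have he : s(u, v) ∈ G.edgeSet := hadj
      have hce := hi ⟨s(u, v), he⟩
      rw [mem_Icc] at hce
      have hcmem : φ (Sum.inr ⟨s(u, v), he⟩) ∈ univ.image h := by
        rw [himg, mem_Icc]
        omega
      obtain ⟨w, _, hw⟩ := Finset.mem_image.mp hcmem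
      have hwe : w ∈ (s(u, v) : Sym2 V) := by
        by_contra hwe
        have hadj2 : (redGraph G).Adj (Sum.inl w) (Sum.inr ⟨s(u, v), he⟩) := by
          rw [redGraph, SimpleGraph.fromRel_adj]
          exact ⟨by simp, Or.inl hwe⟩
        exact φ.valid hadj2 hw
      rcases Sym2.mem_iff.mp hwe with rfl | rfl
      · omega
      · omega
end

section
/- In the reduction graph H from the list-coloring NP-hardness proof: if X is an independent set of size k in G, then H admits a list coloring in which the vertices {c_v : v ∈ X} receive the colors 1,…,k, the remaining clique vertices receive distinct colors from {k+1,…,n}, and each I_{uv} receives the color of c_u or c_v for some endpoint not in X. -/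
open Finset

/-- If `X` is an independent set of size `k` in `G`, then `H` admits a proper list
coloring (lists `L(c_v) = [n]`, `L(I_e) = {k+1,…,n}`) in which the vertices `c_v`,
`v ∈ X`, receive the colors `1,…,k`, the remaining clique vertices receive distinct
colors from `{k+1,…,n}`, and each `I_{uv}` receives the color of `c_w` for some
endpoint `w` of `uv` not in `X`. -/
theorem listColoring_of_independentSet {V : Type*} [Fintype V] [DecidableEq V]
    (G : SimpleGraph V) (k : ℕ) (X : Finset V) (hcard : X.card = k)
    (hX : (↑X : Set V).Pairwise fun a b => ¬ G.Adj a b) :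
    ∃ φ : (redGraph G).Coloring ℕ,
      (∀ v : V, φ (Sum.inl v) ∈ Icc 1 (Fintype.card V)) ∧
      (∀ e : G.edgeSet, φ (Sum.inr e) ∈ Icc (k + 1) (Fintype.card V)) ∧
      (∀ v ∈ X, φ (Sum.inl v) ∈ Icc 1 k) ∧
      (∀ v ∉ X, φ (Sum.inl v) ∈ Icc (k + 1) (Fintype.card V)) ∧
      (∀ u v : V, u ≠ v → φ (Sum.inl u) ≠ φ (Sum.inl v)) ∧
      (∀ e : G.edgeSet, ∃ w ∈ (e : Sym2 V), w ∉ X ∧ φ (Sum.inr e) = φ (Sum.inl w)) := by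
  classical
  have hkn : k ≤ Fintype.card V := hcard ▸ X.card_le_univ
  -- the coloring of clique vertices
  set f : V → ℕ := fun v =>
    if h : v ∈ X then (X.equivFin ⟨v, h⟩ : ℕ) + 1
    else ((Xᶜ).equivFin ⟨v, Finset.mem_compl.mpr h⟩ : ℕ) + k + 1 with hf
  have hfX : ∀ v ∈ X, f v ∈ Icc 1 k := by
    intro v hv
    simp only [hf, dif_pos hv, mem_Icc]
    have := (X.equivFin ⟨v, hv⟩).isLt
    omega
  have hfXc : ∀ v ∉ X, f v ∈ Icc (k + 1) (Fintype.card V) := by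
    intro v hv
    simp only [hf, dif_neg hv, mem_Icc]
    have h1 := ((Xᶜ).equivFin ⟨v, Finset.mem_compl.mpr hv⟩).isLt
    have h2 : (Xᶜ).card = Fintype.card V - k := by rw [Finset.card_compl, hcard]
    omega
  have hfinj : Function.Injective f := by
    intro u v huv
    by_cases hu : u ∈ X <;> by_cases hv : v ∈ X
    · simp only [hf, dif_pos hu, dif_pos hv] at huv
      have := X.equivFin.injective (a₁ := ⟨u, hu⟩) (a₂ := ⟨v, hv⟩)
        (Fin.ext (by omega))
      exact Subtype.ext_iff.mp this
    · have h1 := hfX u hu; have h2 := hfXc v hv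
      rw [mem_Icc] at h1 h2; omega
    · have h1 := hfXc u hu; have h2 := hfX v hv
      rw [mem_Icc] at h1 h2; omega
    · simp only [hf, dif_neg hu, dif_neg hv] at huv
      have := (Xᶜ).equivFin.injective
        (a₁ := ⟨u, Finset.mem_compl.mpr hu⟩) (a₂ := ⟨v, Finset.mem_compl.mpr hv⟩)
        (Fin.ext (by omega))
      exact Subtype.ext_iff.mp this
  -- choosing endpoints outside X
  have hsel : ∀ e : G.edgeSet, ∃ w, w ∈ (e : Sym2 V) ∧ w ∉ X := by
    rintro ⟨e, he⟩
    induction e using Sym2.ind with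
    | _ u v =>
      have hadj : G.Adj u v := he
      by_cases hu : u ∈ X
      · by_cases hv : v ∈ X
        · exact absurd hadj (hX hu hv hadj.ne)
        · exact ⟨v, by simp, hv⟩
      · exact ⟨u, by simp, hu⟩
  choose sel hselmem hselX using hsel
  set c : V ⊕ G.edgeSet → ℕ := Sum.elim f (fun e => f (sel e)) with hc
  have hproper : ∀ {a b}, (redGraph G).Adj a b → c a ≠ c b := by
    intro a b hab
    rw [redGraph, SimpleGraph.fromRel_adj] at hab
    obtain ⟨hne, hrel⟩ := hab
    match a, b with
    | Sum.inl u, Sum.inl v =>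
      have : u ≠ v := by rintro rfl; exact hne rfl
      exact fun h => this (hfinj h)
    | Sum.inl w, Sum.inr e =>
      have hw : w ∉ (e : Sym2 V) := by rcases hrel with h | h <;> exact h
      have : w ≠ sel e := fun h => hw (h ▸ hselmem e)
      exact fun h => this (hfinj h)
    | Sum.inr e, Sum.inl w =>
      have hw : w ∉ (e : Sym2 V) := by rcases hrel with h | h <;> exact h
      have : sel e ≠ w := fun h => hw (h ▸ hselmem e)
      exact fun h => this (hfinj h)
    | Sum.inr e, Sum.inr e' =>
      rcases hrel with h | h <;> exact absurd h not_false
  refine ⟨SimpleGraph.Coloring.mk c hproper, ?_, ?_, ?_, ?_, ?_, ?_⟩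
  · intro v
    by_cases hv : v ∈ X
    · have := hfX v hv; rw [mem_Icc] at this ⊢; exact ⟨this.1, this.2.trans hkn⟩
    · have := hfXc v hv; rw [mem_Icc] at this ⊢
      exact ⟨le_trans (Nat.le_add_left 1 k) this.1, this.2⟩
  · intro e; exact hfXc (sel e) (hselX e)
  · exact hfX
  · exact hfXc
  · intro u v huv h; exact huv (hfinj h)
  · intro e; exact ⟨sel e, hselmem e, hselX e, rfl⟩
end

section
/- In the reduction graph H: if φ is a proper list coloring of H (with lists L(c_v) = [n], L(I_{uv}) = {k+1,…,n}, all clique vertices receiving distinct colors from [n]), then X = {u ∈ V(G) : φ(c_u) ∈ [k]} is an independent set in G of size at most k. -/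
open Finset

/-- If `φ` is a proper list coloring of `H` (lists `L(c_v) = [n]`,
`L(I_e) = {k+1,…,n}`; the clique vertices automatically receive distinct colors
from `[n]`), then `X = {u : φ(c_u) ∈ [k]}` is an independent set in `G` of size at
most `k`. -/
theorem independentSet_of_listColoring {V : Type*} [Fintype V] [DecidableEq V]
    (G : SimpleGraph V) (k : ℕ) (hk : k ≤ Fintype.card V)
    (φ : (redGraph G).Coloring ℕ)
    (hLc : ∀ v : V, φ (Sum.inl v) ∈ Icc 1 (Fintype.card V))
    (hLi : ∀ e : G.edgeSet, φ (Sum.inr e) ∈ Icc (k + 1) (Fintype.card V))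
    (hdist : ∀ u v : V, u ≠ v → φ (Sum.inl u) ≠ φ (Sum.inl v)) :
    ((↑(univ.filter fun u : V => φ (Sum.inl u) ∈ Icc 1 k) : Set V).Pairwise
        fun a b => ¬ G.Adj a b) ∧
      (univ.filter fun u : V => φ (Sum.inl u) ∈ Icc 1 k).card ≤ k := by
  set n := Fintype.card V
  -- The image of clique vertices is all of Icc 1 n
  have himg : (univ : Finset V).image (fun u => φ (Sum.inl u)) = Icc 1 n := by
    apply Finset.eq_of_subset_of_card_le
    · intro c hc
      simp only [mem_image, mem_univ, true_and] at hc
      obtain ⟨u, rfl⟩ := hc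
      exact hLc u
    · rw [Nat.card_Icc]
      have : (univ : Finset V).card ≤ ((univ : Finset V).image fun u => φ (Sum.inl u)).card :=
        Finset.card_le_card_of_injOn _ (fun a _ => mem_image_of_mem _ (mem_univ a))
          (fun a _ b _ h => by
            by_contra hne
            exact hdist a b hne h)
      simpa [n] using this
  constructor
  · intro a ha b hb hne hab
    simp only [coe_filter, Set.mem_setOf_eq, mem_univ, true_and, mem_Icc] at ha hb
    -- the edge
    have he : s(a, b) ∈ G.edgeSet := hab
    set e : G.edgeSet := ⟨s(a, b), he⟩
    -- φ (inr e) ∈ Icc 1 n, so it's φ (inl w) for some w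
    have hmem : φ (Sum.inr e) ∈ Icc 1 n := by
      have := hLi e
      rw [mem_Icc] at this ⊢
      omega
    rw [← himg, mem_image] at hmem
    obtain ⟨w, -, hw⟩ := hmem
    -- w ∈ e, since otherwise inl w adj inr e
    have hwe : w ∈ (e : Sym2 V) := by
      by_contra hwn
      have hadj : (redGraph G).Adj (Sum.inl w) (Sum.inr e) := by
        constructor
        · simp
        · exact Or.inl hwn
      exact φ.valid hadj hw
    have hwab : w = a ∨ w = b := by
      simpa [e, Sym2.mem_iff] using hwe
    have hik := hLi e
    rw [mem_Icc] at hik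
    rcases hwab with rfl | rfl <;> omega
  · calc (univ.filter fun u : V => φ (Sum.inl u) ∈ Icc 1 k).card
        ≤ (Icc 1 k).card := by
          apply Finset.card_le_card_of_injOn (fun u => φ (Sum.inl u))
          · intro a ha
            simp only [mem_coe, mem_filter] at ha
            exact ha.2
          · intro a _ b _ h
            by_contra hne
            exact hdist a b hne h
      _ = k := by rw [Nat.card_Icc]; omega
end

section
/- Let G be a graph with a set X ⊆ V(G) of size k such that G \ X is a clique C, and let f be a proper precoloring of a subset W ⊆ V(G) using colors [t]. If a vertex v ∈ X \ W has more than 2k colors in its admissible list L(v) = [t] \ f(N(v) ∩ W), and at least k of those colors are used on precolored clique vertices, then any proper partial coloring of G in which at most k vertices of X besides v are colored can be extended to color v from L(v). -/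
open Finset

/-- Let `G` have a modulator `X` of size `k` to a clique (`G \ X` is a clique), and let
`f` be a proper precoloring of `W ⊆ V(G)` with colors from `[t]`.  Suppose a vertex
`v ∈ X \ W` has more than `2k` colors in its admissible list `L(v) = [t] \ f(N(v) ∩ W)`
and at least `k` of those colors are used on precolored clique vertices.  Then any
proper partial coloring of `G` extending `f` whose only colored vertices outside `W`
lie in `X`, with at most `k` vertices of `X` besides `v` colored (and `v` uncolored),
can be extended by a color from `L(v)` at `v`. -/
theorem greedy_color_modulator_vertex {V : Type*} [Fintype V] [DecidableEq V]
    (G : SimpleGraph V) [DecidableRel G.Adj]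
    (X : Finset V) (k : ℕ) (hk : X.card = k)
    (hclique : G.IsClique ((↑X : Set V)ᶜ))
    (W : Finset V) (t : ℕ) (f : V → ℕ)
    (hfcol : ∀ w ∈ W, f w ∈ Icc 1 t)
    (hfproper : ∀ a ∈ W, ∀ b ∈ W, G.Adj a b → f a ≠ f b)
    (v : V) (hvX : v ∈ X) (hvW : v ∉ W)
    (hbig : 2 * k <
      ((Icc 1 t).filter fun a => ∀ w ∈ W, G.Adj v w → f w ≠ a).card)
    (hcliquecolors : k ≤
      (((Icc 1 t).filter fun a => ∀ w ∈ W, G.Adj v w → f w ≠ a).filter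
        fun a => ∃ w ∈ W, w ∉ X ∧ f w = a).card)
    (c : V → Option ℕ)
    (hcf : ∀ w ∈ W, c w = some (f w))
    (hcv : c v = none)
    (hcdom : ∀ u : V, (c u).isSome → u ∈ W ∨ u ∈ X)
    (hcX : ((X.erase v).filter fun u => (c u).isSome).card ≤ k)
    (hcproper : ∀ a b : V, G.Adj a b → ∀ x : ℕ, c a = some x → c b ≠ some x) :
    ∃ a ∈ (Icc 1 t).filter fun a => ∀ w ∈ W, G.Adj v w → f w ≠ a,
      ∀ u : V, G.Adj v u → c u ≠ some a := by
  classical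
  set L := (Icc 1 t).filter fun a => ∀ w ∈ W, G.Adj v w → f w ≠ a with hL
  set S := (X.erase v).filter fun u => (c u).isSome with hS
  set Bad := L.filter (fun a => ∃ u, G.Adj v u ∧ c u = some a) with hBad
  have hsub : Bad ⊆ S.image (fun u => (c u).getD 0) := by
    intro a ha
    rw [hBad, mem_filter] at ha
    obtain ⟨haL, u, hadj, hcu⟩ := ha
    have huX : u ∈ X := by
      rcases hcdom u (by rw [hcu]; rfl) with huW | huX
      · exfalso
        have := hcf u huW
        rw [this] at hcu
        have hfua : f u = a := by injection hcu
        rw [hL, mem_filter] at haL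
        exact haL.2 u huW hadj hfua
      · exact huX
    have hune : u ≠ v := by rintro rfl; rw [hcv] at hcu; exact Option.some_ne_none a hcu.symm
    refine mem_image.mpr ⟨u, ?_, ?_⟩
    · rw [hS, mem_filter, mem_erase]; exact ⟨⟨hune, huX⟩, by rw [hcu]; rfl⟩
    · rw [hcu]; rfl
  have hBadcard : Bad.card ≤ k :=
    le_trans (le_trans (card_le_card hsub) (card_image_le)) hcX
  have hne : (L \ Bad).Nonempty := by
    apply card_pos.mp
    have h1 : (L \ Bad).card + Bad.card = L.card :=
      card_sdiff_add_card_eq_card (by rw [hBad]; exact filter_subset _ _)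
    have h2 : 2 * k < L.card := hbig
    omega
  obtain ⟨a, ha⟩ := hne
  rw [mem_sdiff] at ha
  refine ⟨a, ha.1, fun u hadj hcu => ?_⟩
  exact ha.2 (by rw [hBad, mem_filter]; exact ⟨ha.1, u, hadj, hcu⟩)
end
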